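/- arXiv:2308.10222 — 3 statements merged into one kernel-verified Lean document; each statement's English description precedes it below -/
import Mathlib

section
/- For every γ < 1 there are constants 0 < c₁ ≤ c₂ depending only on n and γ such that for all z₁, z₂ ∈ ℝⁿ with |z₁| + |z₂| + ω > 0, c₁ (|z₁|² + |z₂|² + ω²)^{-γ/2} ≤ ∫₀¹ (|z₂ + τ(z₁ - z₂)|² + ω²)^{-γ/2} dτ ≤ c₂ (|z₁|² + |z₂|² + ω²)^{-γ/2}. -/
open MeasureTheory Set intervalIntegral

set_option maxHeartbeats 1000000

/-- two-sided equivalence (l60) of the paper, valid for `γ < 1`. -/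
theorem segment_power_two_sided (n : ℕ) (γ : ℝ) (hγ : γ < 1) :
    ∃ c₁ c₂ : ℝ, 0 < c₁ ∧ c₁ ≤ c₂ ∧
      ∀ (z₁ z₂ : EuclideanSpace ℝ (Fin n)) (ω : ℝ),
        ω ∈ Set.Icc (0:ℝ) 1 → 0 < ‖z₁‖ + ‖z₂‖ + ω →
        c₁ * (‖z₁‖ ^ 2 + ‖z₂‖ ^ 2 + ω ^ 2) ^ (-(γ / 2)) ≤
            (∫ τ in (0:ℝ)..1, (‖z₂ + τ • (z₁ - z₂)‖ ^ 2 + ω ^ 2) ^ (-(γ / 2))) ∧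
          (∫ τ in (0:ℝ)..1, (‖z₂ + τ • (z₁ - z₂)‖ ^ 2 + ω ^ 2) ^ (-(γ / 2))) ≤
            c₂ * (‖z₁‖ ^ 2 + ‖z₂‖ ^ 2 + ω ^ 2) ^ (-(γ / 2)) := by
  have h4γ : (0:ℝ) < (4:ℝ) ^ γ := Real.rpow_pos_of_pos (by norm_num) γ
  refine ⟨min 1 ((4:ℝ) ^ γ) / 4, max 2 (4 / (1 - γ)), by positivity, ?_, ?_⟩
  · have h1 : min 1 ((4:ℝ) ^ γ) ≤ 1 := min_le_left _ _
    have h2 : (2:ℝ) ≤ max 2 (4 / (1 - γ)) := le_max_left _ _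
    linarith
  intro z₁ z₂ ω hω hpos
  obtain ⟨hω0, hω1⟩ := hω
  have hA : 0 ≤ ‖z₁‖ := norm_nonneg _
  have hB : 0 ≤ ‖z₂‖ := norm_nonneg _
  set A := ‖z₁‖ with hAdef
  set B := ‖z₂‖ with hBdef
  set S := A ^ 2 + B ^ 2 + ω ^ 2 with hSdef
  set f : ℝ → ℝ := fun τ => (‖z₂ + τ • (z₁ - z₂)‖ ^ 2 + ω ^ 2) ^ (-(γ / 2)) with hfdef
  have hS : 0 < S := by
    simp only [hSdef]
    nlinarith [mul_pos hpos hpos, sq_nonneg (A - B), sq_nonneg (A - ω), sq_nonneg (B - ω)]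
  have hSe_pos : 0 < S ^ (-(γ/2)) := Real.rpow_pos_of_pos hS _
  have hbase_pos : ∀ τ : ℝ, 0 ≤ ‖z₂ + τ • (z₁ - z₂)‖ ^ 2 + ω ^ 2 := fun τ => by positivity
  have hf_nonneg : ∀ τ : ℝ, 0 ≤ f τ := fun τ => Real.rpow_nonneg (hbase_pos τ) _
  have hfm : Measurable f := by
    rw [hfdef]
    fun_prop
  have hv_le : ∀ τ ∈ Icc (0:ℝ) 1, ‖z₂ + τ • (z₁ - z₂)‖ ^ 2 + ω ^ 2 ≤ S := by
    intro τ hτ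
    obtain ⟨h0, h1⟩ := hτ
    have he : z₂ + τ • (z₁ - z₂) = τ • z₁ + (1 - τ) • z₂ := by module
    have hn : ‖z₂ + τ • (z₁ - z₂)‖ ≤ τ * A + (1 - τ) * B := by
      rw [he]
      refine (norm_add_le _ _).trans ?_
      rw [norm_smul, norm_smul, Real.norm_eq_abs, Real.norm_eq_abs, abs_of_nonneg h0,
        abs_of_nonneg (by linarith : (0:ℝ) ≤ 1 - τ)]
    have hn0 : 0 ≤ ‖z₂ + τ • (z₁ - z₂)‖ := norm_nonneg _
    have hsq : (τ * A + (1 - τ) * B) ^ 2 ≤ A ^ 2 + B ^ 2 := by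
      nlinarith [mul_nonneg (mul_nonneg h0 (by linarith : (0:ℝ) ≤ 1 - τ)) (sq_nonneg (A - B)),
        mul_nonneg hA hB, sq_nonneg (A - B)]
    simp only [hSdef]
    nlinarith
  have hv_ge : ∀ τ ∈ Icc (0:ℝ) 1, |τ * A - (1 - τ) * B| ≤ ‖z₂ + τ • (z₁ - z₂)‖ := by
    intro τ hτ
    obtain ⟨h0, h1⟩ := hτ
    have he : z₂ + τ • (z₁ - z₂) = τ • z₁ - (τ - 1) • z₂ := by module
    have h := abs_norm_sub_norm_le (τ • z₁) ((τ - 1) • z₂)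
    rw [← he] at h
    rw [norm_smul, norm_smul, Real.norm_eq_abs, Real.norm_eq_abs, abs_of_nonneg h0,
      abs_of_nonpos (by linarith : τ - 1 ≤ 0)] at h
    rw [show (1 - τ) * B = -(τ - 1) * B by ring]
    exact h
  have hvL : ∀ τ ∈ Icc (0:ℝ) 1, A + B ≠ 0 →
      (A + B) * |τ - B / (A + B)| ≤ ‖z₂ + τ • (z₁ - z₂)‖ := by
    intro τ hτ hABne
    have h := hv_ge τ hτ
    have he : τ * A - (1 - τ) * B = (A + B) * (τ - B / (A + B)) := by
      field_simp
      ring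
    rw [he, abs_mul, abs_of_nonneg (add_nonneg hA hB)] at h
    exact h
  have hC2 : (2:ℝ) ≤ max 2 (4 / (1 - γ)) := le_max_left _ _
  have key : IntervalIntegrable f volume 0 1 ∧
      (∫ τ in (0:ℝ)..1, f τ) ≤ max 2 (4 / (1 - γ)) * S ^ (-(γ/2)) := by
    rcases le_or_gt γ 0 with hγ0 | hγ0
    · -- γ ≤ 0 : the integrand is bounded by S^(-(γ/2)) on [0,1]
      have hb : ∀ τ ∈ Icc (0:ℝ) 1, f τ ≤ S ^ (-(γ/2)) := fun τ hτ =>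
        Real.rpow_le_rpow (hbase_pos τ) (hv_le τ hτ) (by linarith)
      have hint : IntervalIntegrable f volume 0 1 := by
        refine (_root_.intervalIntegrable_const (c := S ^ (-(γ/2)))).mono_fun'
          (hfm.aestronglyMeasurable.restrict) ?_
        filter_upwards [ae_restrict_mem measurableSet_uIoc] with τ hτ
        rw [Set.uIoc_of_le (by norm_num : (0:ℝ) ≤ 1)] at hτ
        rw [Real.norm_eq_abs, abs_of_nonneg (hf_nonneg τ)]
        exact hb τ (Ioc_subset_Icc_self hτ)
      refine ⟨hint, ?_⟩
      calc (∫ τ in (0:ℝ)..1, f τ) ≤ ∫ _τ in (0:ℝ)..1, S ^ (-(γ/2)) :=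
            integral_mono_on (by norm_num) hint _root_.intervalIntegrable_const hb
        _ = S ^ (-(γ/2)) := by simp
        _ ≤ max 2 (4 / (1 - γ)) * S ^ (-(γ/2)) :=
            le_mul_of_one_le_left hSe_pos.le (by linarith)
    · rcases le_or_gt (A + B) ω with hLω | hωL
      · -- ω dominates : the base is ≥ S/2 everywhere
        have hS2 : S ≤ 2 * ω ^ 2 := by
          simp only [hSdef]
          nlinarith [mul_nonneg hA hB, mul_self_le_mul_self (add_nonneg hA hB) hLω]
        have hb : ∀ τ : ℝ, f τ ≤ (S / 2) ^ (-(γ/2)) := by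
          intro τ
          refine Real.rpow_le_rpow_of_nonpos (by linarith) ?_ (by linarith)
          have h := le_add_of_nonneg_left (a := ω ^ 2) (sq_nonneg ‖z₂ + τ • (z₁ - z₂)‖)
          linarith [sq_nonneg ‖z₂ + τ • (z₁ - z₂)‖]
        have hval : (S / 2) ^ (-(γ/2)) ≤ 2 * S ^ (-(γ/2)) := by
          have h1 : (S / 2) ^ (-(γ/2)) = S ^ (-(γ/2)) * ((2:ℝ) ^ (γ/2)) := by
            rw [Real.div_rpow hS.le (by norm_num : (0:ℝ) ≤ 2),
              Real.rpow_neg (by norm_num : (0:ℝ) ≤ 2), div_inv_eq_mul]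
          have h2 : (2:ℝ) ^ (γ/2) ≤ 2 := by
            calc (2:ℝ) ^ (γ/2) ≤ (2:ℝ) ^ (1:ℝ) :=
                  Real.rpow_le_rpow_of_exponent_le one_le_two (by linarith)
              _ = 2 := Real.rpow_one 2
          calc (S / 2) ^ (-(γ/2)) = S ^ (-(γ/2)) * ((2:ℝ) ^ (γ/2)) := h1
            _ ≤ S ^ (-(γ/2)) * 2 := mul_le_mul_of_nonneg_left h2 hSe_pos.le
            _ = 2 * S ^ (-(γ/2)) := by ring
        have hint : IntervalIntegrable f volume 0 1 := by
          refine (_root_.intervalIntegrable_const (c := (S / 2) ^ (-(γ/2)))).mono_fun'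
            (hfm.aestronglyMeasurable.restrict) ?_
          filter_upwards with τ
          rw [Real.norm_eq_abs, abs_of_nonneg (hf_nonneg τ)]
          exact hb τ
        refine ⟨hint, ?_⟩
        calc (∫ τ in (0:ℝ)..1, f τ) ≤ ∫ _τ in (0:ℝ)..1, (S / 2) ^ (-(γ/2)) :=
              integral_mono_on (by norm_num) hint _root_.intervalIntegrable_const (fun τ _ => hb τ)
          _ = (S / 2) ^ (-(γ/2)) := by simp
          _ ≤ 2 * S ^ (-(γ/2)) := hval
          _ ≤ max 2 (4 / (1 - γ)) * S ^ (-(γ/2)) :=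
              mul_le_mul_of_nonneg_right hC2 hSe_pos.le
      · -- main case : 0 < γ < 1, ω < A + B
        have hL : 0 < A + B := lt_of_le_of_lt hω0 hωL
        set s := B / (A + B) with hsdef
        have hs0 : 0 ≤ s := div_nonneg hB hL.le
        have hs1 : s ≤ 1 := (div_le_one hL).mpr (by linarith)
        have hne_ae : ∀ᵐ τ : ℝ ∂volume, τ ≠ s := by
          have hset : {τ : ℝ | ¬ τ ≠ s} = {s} := by ext τ; simp
          rw [MeasureTheory.ae_iff, hset]
          exact Real.volume_singleton
        have hbound : ∀ τ ∈ Icc (0:ℝ) 1, τ ≠ s →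
            f τ ≤ (A + B) ^ (-γ) * |τ - s| ^ (-γ) := by
          intro τ hτ hne
          have h1 : 0 < |τ - s| := abs_pos.mpr (sub_ne_zero.mpr hne)
          have h2 : (A + B) * |τ - s| ≤ ‖z₂ + τ • (z₁ - z₂)‖ := hvL τ hτ hL.ne'
          have h3 : ((A + B) * |τ - s|) ^ 2 ≤ ‖z₂ + τ • (z₁ - z₂)‖ ^ 2 + ω ^ 2 := by
            nlinarith [norm_nonneg (z₂ + τ • (z₁ - z₂)), sq_nonneg ω, mul_pos hL h1]
          have h4 : f τ ≤ (((A + B) * |τ - s|) ^ 2) ^ (-(γ/2)) :=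
            Real.rpow_le_rpow_of_nonpos (by positivity) h3 (by linarith)
          have h5 : (((A + B) * |τ - s|) ^ 2) ^ (-(γ/2)) = ((A + B) * |τ - s|) ^ (-γ) := by
            rw [← Real.rpow_natCast ((A + B) * |τ - s|) 2,
              ← Real.rpow_mul (by positivity : (0:ℝ) ≤ (A + B) * |τ - s|)]
            congr 1
            push_cast
            ring
          rw [h5, Real.mul_rpow hL.le h1.le] at h4
          exact h4
        have hr : (-1:ℝ) < -γ := by linarith
        have hγ1 : (0:ℝ) < -γ + 1 := by linarith
        have hint₂ : IntervalIntegrable (fun τ : ℝ => (τ - s) ^ (-γ)) volume s 1 := by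
          have h := (intervalIntegrable_rpow' (a := 0) (b := 1 - s) hr).comp_sub_right s
          simpa using h
        have hint₁ : IntervalIntegrable (fun τ : ℝ => (s - τ) ^ (-γ)) volume 0 s := by
          have h := (intervalIntegrable_rpow' (a := s) (b := 0) hr).comp_sub_left s
          simpa using h
        have hf₂ : IntervalIntegrable f volume s 1 := by
          refine (hint₂.const_mul ((A + B) ^ (-γ))).mono_fun'
            (hfm.aestronglyMeasurable.restrict) ?_
          filter_upwards [ae_restrict_mem measurableSet_uIoc] with τ hτ
          rw [Set.uIoc_of_le hs1] at hτ
          have hτ' : τ ∈ Icc (0:ℝ) 1 := ⟨le_trans hs0 hτ.1.le, hτ.2⟩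
          rw [Real.norm_eq_abs, abs_of_nonneg (hf_nonneg τ)]
          have h := hbound τ hτ' hτ.1.ne'
          rwa [abs_of_nonneg (by linarith [hτ.1] : (0:ℝ) ≤ τ - s)] at h
        have hf₁ : IntervalIntegrable f volume 0 s := by
          refine (hint₁.const_mul ((A + B) ^ (-γ))).mono_fun'
            (hfm.aestronglyMeasurable.restrict) ?_
          filter_upwards [ae_restrict_mem measurableSet_uIoc, ae_restrict_of_ae hne_ae]
            with τ hτ hne
          rw [Set.uIoc_of_le hs0] at hτ
          have hτ' : τ ∈ Icc (0:ℝ) 1 := ⟨hτ.1.le, le_trans hτ.2 hs1⟩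
          rw [Real.norm_eq_abs, abs_of_nonneg (hf_nonneg τ)]
          have h := hbound τ hτ' hne
          rwa [abs_sub_comm, abs_of_nonneg (by linarith [hτ.2] : (0:ℝ) ≤ s - τ)] at h
        have hint01 : IntervalIntegrable f volume 0 1 := hf₁.trans hf₂
        have hI₂ : (∫ τ in s..1, (τ - s) ^ (-γ)) = (1 - s) ^ (-γ + 1) / (-γ + 1) := by
          rw [intervalIntegral.integral_comp_sub_right (fun x : ℝ => x ^ (-γ)) s, sub_self,
            integral_rpow (Or.inl hr), Real.zero_rpow (by linarith : -γ + 1 ≠ 0)]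
          ring
        have hI₁ : (∫ τ in (0:ℝ)..s, (s - τ) ^ (-γ)) = s ^ (-γ + 1) / (-γ + 1) := by
          rw [intervalIntegral.integral_comp_sub_left (fun x : ℝ => x ^ (-γ)) s, sub_self,
            sub_zero, integral_rpow (Or.inl hr), Real.zero_rpow (by linarith : -γ + 1 ≠ 0)]
          ring
        have hABγ : 0 ≤ (A + B) ^ (-γ) := Real.rpow_nonneg hL.le _
        have hub₂ : (∫ τ in s..1, f τ) ≤ (A + B) ^ (-γ) / (1 - γ) := by
          have hmono : (∫ τ in s..1, f τ) ≤
              ∫ τ in s..1, (A + B) ^ (-γ) * (τ - s) ^ (-γ) := by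
            refine integral_mono_ae_restrict hs1 hf₂ (hint₂.const_mul _) ?_
            filter_upwards [ae_restrict_mem measurableSet_Icc, ae_restrict_of_ae hne_ae]
              with τ hτ hne
            have hτ' : τ ∈ Icc (0:ℝ) 1 := ⟨le_trans hs0 hτ.1, hτ.2⟩
            have h := hbound τ hτ' hne
            have hst : s < τ := lt_of_le_of_ne hτ.1 (Ne.symm hne)
            rwa [abs_of_nonneg (by linarith : (0:ℝ) ≤ τ - s)] at h
          rw [intervalIntegral.integral_const_mul, hI₂] at hmono
          refine hmono.trans ?_
          have h1 : (1 - s) ^ (-γ + 1) ≤ 1 :=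
            Real.rpow_le_one (by linarith) (by linarith) (by linarith)
          calc (A + B) ^ (-γ) * ((1 - s) ^ (-γ + 1) / (-γ + 1))
              ≤ (A + B) ^ (-γ) * (1 / (-γ + 1)) := by gcongr
            _ = (A + B) ^ (-γ) / (1 - γ) := by rw [show -γ + 1 = 1 - γ by ring]; ring
        have hub₁ : (∫ τ in (0:ℝ)..s, f τ) ≤ (A + B) ^ (-γ) / (1 - γ) := by
          have hmono : (∫ τ in (0:ℝ)..s, f τ) ≤
              ∫ τ in (0:ℝ)..s, (A + B) ^ (-γ) * (s - τ) ^ (-γ) := by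
            refine integral_mono_ae_restrict hs0 hf₁ (hint₁.const_mul _) ?_
            filter_upwards [ae_restrict_mem measurableSet_Icc, ae_restrict_of_ae hne_ae]
              with τ hτ hne
            have hτ' : τ ∈ Icc (0:ℝ) 1 := ⟨hτ.1, le_trans hτ.2 hs1⟩
            have h := hbound τ hτ' hne
            rwa [abs_sub_comm, abs_of_nonneg (by linarith [hτ.2] : (0:ℝ) ≤ s - τ)] at h
          rw [intervalIntegral.integral_const_mul, hI₁] at hmono
          refine hmono.trans ?_
          have h1 : s ^ (-γ + 1) ≤ 1 := Real.rpow_le_one hs0 hs1 (by linarith)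
          calc (A + B) ^ (-γ) * (s ^ (-γ + 1) / (-γ + 1))
              ≤ (A + B) ^ (-γ) * (1 / (-γ + 1)) := by gcongr
            _ = (A + B) ^ (-γ) / (1 - γ) := by rw [show -γ + 1 = 1 - γ by ring]; ring
        have hLS : (A + B) ^ (-γ) ≤ 2 * S ^ (-(γ/2)) := by
          have hS2L : S ≤ 2 * (A + B) ^ 2 := by
            simp only [hSdef]
            nlinarith [mul_nonneg hA hB, mul_self_lt_mul_self hω0 hωL]
          have h1 : S ^ (γ/2) ≤ (2 * (A + B) ^ 2) ^ (γ/2) :=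
            Real.rpow_le_rpow hS.le hS2L (by linarith)
          have h2 : (2 * (A + B) ^ 2 : ℝ) ^ (γ/2) = 2 ^ (γ/2) * ((A + B) ^ 2 : ℝ) ^ (γ/2) :=
            Real.mul_rpow (by norm_num) (by positivity)
          have h3 : ((A + B) ^ 2 : ℝ) ^ (γ/2) = (A + B) ^ γ := by
            rw [← Real.rpow_natCast (A + B) 2, ← Real.rpow_mul hL.le]
            congr 1
            push_cast
            ring
          have h4 : (2:ℝ) ^ (γ/2) ≤ 2 := by
            calc (2:ℝ) ^ (γ/2) ≤ (2:ℝ) ^ (1:ℝ) :=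
                  Real.rpow_le_rpow_of_exponent_le one_le_two (by linarith)
              _ = 2 := Real.rpow_one 2
          have h5 : S ^ (γ/2) ≤ 2 * (A + B) ^ γ := by
            calc S ^ (γ/2) ≤ 2 ^ (γ/2) * (A + B) ^ γ := by rw [← h3, ← h2]; exact h1
              _ ≤ 2 * (A + B) ^ γ :=
                  mul_le_mul_of_nonneg_right h4 (Real.rpow_nonneg hL.le γ)
          have hLγ : 0 < (A + B) ^ γ := Real.rpow_pos_of_pos hL γ
          have hSγ : 0 < S ^ (γ/2) := Real.rpow_pos_of_pos hS _
          rw [Real.rpow_neg hL.le, show (-(γ/2)) = -(γ/2) from rfl, Real.rpow_neg hS.le]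
          have h6 : (1:ℝ) / ((A + B) ^ γ) ≤ 2 / (S ^ (γ/2)) := by
            rw [div_le_div_iff₀ hLγ hSγ]
            linarith
          calc ((A + B) ^ γ)⁻¹ = 1 / ((A + B) ^ γ) := (one_div _).symm
            _ ≤ 2 / (S ^ (γ/2)) := h6
            _ = 2 * (S ^ (γ/2))⁻¹ := by rw [div_eq_mul_inv]
        refine ⟨hint01, ?_⟩
        have hsplit : (∫ τ in (0:ℝ)..1, f τ) =
            (∫ τ in (0:ℝ)..s, f τ) + ∫ τ in s..1, f τ :=
          (integral_add_adjacent_intervals hf₁ hf₂).symm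
        have h1γ : (0:ℝ) < 1 - γ := by linarith
        calc (∫ τ in (0:ℝ)..1, f τ)
            ≤ (A + B) ^ (-γ) / (1 - γ) + (A + B) ^ (-γ) / (1 - γ) := by
              rw [hsplit]; exact add_le_add hub₁ hub₂
          _ = 2 * (A + B) ^ (-γ) / (1 - γ) := by ring
          _ ≤ 2 * (2 * S ^ (-(γ/2))) / (1 - γ) := by gcongr
          _ = (4 / (1 - γ)) * S ^ (-(γ/2)) := by ring
          _ ≤ max 2 (4 / (1 - γ)) * S ^ (-(γ/2)) :=
              mul_le_mul_of_nonneg_right (le_max_right _ _) hSe_pos.le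
  obtain ⟨hint01, hupper⟩ := key
  refine ⟨?_, hupper⟩
  -- lower bound
  obtain ⟨σ, hσ0, hσ1, hdist⟩ : ∃ σ : ℝ, 0 ≤ σ ∧ σ + 1/4 ≤ 1 ∧
      ∀ τ ∈ Icc σ (σ + 1/4), 1/4 ≤ |τ - B / (A + B)| := by
    rcases le_or_gt (B / (A + B)) (1/2) with h | h
    · refine ⟨3/4, by norm_num, by norm_num, fun τ hτ => ?_⟩
      rw [abs_of_nonneg (by linarith [hτ.1] : (0:ℝ) ≤ τ - B / (A + B))]
      linarith [hτ.1]
    · refine ⟨0, le_rfl, by norm_num, fun τ hτ => ?_⟩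
      rw [abs_sub_comm, abs_of_nonneg (by linarith [hτ.2] : (0:ℝ) ≤ B / (A + B) - τ)]
      linarith [hτ.2]
  have hσ14 : σ ≤ σ + 1/4 := by linarith
  have hsub : Icc σ (σ + 1/4) ⊆ Icc (0:ℝ) 1 := Icc_subset_Icc hσ0 hσ1
  have hmid : ∀ τ ∈ Icc σ (σ + 1/4), S/16 ≤ ‖z₂ + τ • (z₁ - z₂)‖ ^ 2 + ω ^ 2 := by
    intro τ hτ
    rcases eq_or_ne (A + B) 0 with hAB | hAB
    · have hA0 : A = 0 := by linarith
      have hB0 : B = 0 := by linarith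
      have hz₁ : z₁ = 0 := norm_eq_zero.mp (by rw [← hAdef]; exact hA0)
      have hz₂ : z₂ = 0 := norm_eq_zero.mp (by rw [← hBdef]; exact hB0)
      have hv0 : ‖z₂ + τ • (z₁ - z₂)‖ = 0 := by rw [hz₁, hz₂]; simp
      rw [hv0]
      simp only [hSdef]
      nlinarith [sq_nonneg ω]
    · have hL : 0 < A + B := lt_of_le_of_ne (add_nonneg hA hB) (Ne.symm hAB)
      have h1 := hvL τ (hsub hτ) hAB
      have h2 := hdist τ hτ
      have h3 : (A + B) / 4 ≤ ‖z₂ + τ • (z₁ - z₂)‖ := by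
        calc (A + B) / 4 = (A + B) * (1/4) := by ring
          _ ≤ (A + B) * |τ - B / (A + B)| := by
              exact mul_le_mul_of_nonneg_left h2 hL.le
          _ ≤ _ := h1
      have h4 : (A + B) ^ 2 / 16 ≤ ‖z₂ + τ • (z₁ - z₂)‖ ^ 2 := by
        nlinarith [norm_nonneg (z₂ + τ • (z₁ - z₂)),
          mul_self_le_mul_self (by positivity : (0:ℝ) ≤ (A + B) / 4) h3]
      simp only [hSdef]
      nlinarith [mul_nonneg hA hB, sq_nonneg ω]
  have hlow_pt : ∀ τ ∈ Icc σ (σ + 1/4),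
      min 1 ((4:ℝ) ^ γ) * S ^ (-(γ/2)) ≤ f τ := by
    intro τ hτ
    have hx1 : S/16 ≤ ‖z₂ + τ • (z₁ - z₂)‖ ^ 2 + ω ^ 2 := hmid τ hτ
    have hx2 : ‖z₂ + τ • (z₁ - z₂)‖ ^ 2 + ω ^ 2 ≤ S := hv_le τ (hsub hτ)
    have hxpos : 0 < ‖z₂ + τ • (z₁ - z₂)‖ ^ 2 + ω ^ 2 := lt_of_lt_of_le (by linarith) hx1
    rcases le_or_gt 0 γ with h | h
    · have hle : S ^ (-(γ/2)) ≤ f τ :=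
        Real.rpow_le_rpow_of_nonpos hxpos hx2 (by linarith)
      calc min 1 ((4:ℝ) ^ γ) * S ^ (-(γ/2)) ≤ 1 * S ^ (-(γ/2)) :=
            mul_le_mul_of_nonneg_right (min_le_left _ _) hSe_pos.le
        _ = S ^ (-(γ/2)) := one_mul _
        _ ≤ f τ := hle
    · have h16 : (S/16) ^ (-(γ/2)) ≤ f τ :=
        Real.rpow_le_rpow (by linarith) hx1 (by linarith)
      have heq : (S/16) ^ (-(γ/2)) = (4:ℝ) ^ γ * S ^ (-(γ/2)) := by
        have h16e : (16:ℝ) ^ (γ/2) = (4:ℝ) ^ γ := by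
          rw [show (16:ℝ) = 4 ^ (2:ℕ) by norm_num, ← Real.rpow_natCast 4 2,
            ← Real.rpow_mul (by norm_num : (0:ℝ) ≤ 4)]
          congr 1
          push_cast
          ring
        rw [Real.div_rpow hS.le (by norm_num : (0:ℝ) ≤ 16),
          Real.rpow_neg (by norm_num : (0:ℝ) ≤ 16), div_inv_eq_mul, h16e]
        ring
      rw [heq] at h16
      calc min 1 ((4:ℝ) ^ γ) * S ^ (-(γ/2)) ≤ (4:ℝ) ^ γ * S ^ (-(γ/2)) :=
            mul_le_mul_of_nonneg_right (min_le_right _ _) hSe_pos.le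
        _ ≤ f τ := h16
  have hseg : ∀ a b : ℝ, 0 ≤ a → a ≤ b → b ≤ 1 → IntervalIntegrable f volume a b := by
    intro a b ha hab hb
    refine hint01.mono_set ?_
    rw [Set.uIcc_of_le hab, Set.uIcc_of_le (by norm_num : (0:ℝ) ≤ 1)]
    exact Icc_subset_Icc ha hb
  have e1 : (∫ τ in (0:ℝ)..σ, f τ) + (∫ τ in σ..(σ + 1/4), f τ)
      + (∫ τ in (σ + 1/4)..1, f τ) = ∫ τ in (0:ℝ)..1, f τ := by
    rw [integral_add_adjacent_intervals (hseg 0 σ le_rfl hσ0 (by linarith))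
      (hseg σ (σ + 1/4) hσ0 hσ14 hσ1),
      integral_add_adjacent_intervals (hseg 0 (σ + 1/4) le_rfl (by linarith) hσ1)
      (hseg (σ + 1/4) 1 (by linarith) hσ1 le_rfl)]
  have e2 : min 1 ((4:ℝ) ^ γ) / 4 * S ^ (-(γ/2)) ≤ ∫ τ in σ..(σ + 1/4), f τ := by
    have hconst : (∫ _τ in σ..(σ + 1/4), min 1 ((4:ℝ) ^ γ) * S ^ (-(γ/2)))
        = min 1 ((4:ℝ) ^ γ) / 4 * S ^ (-(γ/2)) := by
      rw [intervalIntegral.integral_const, smul_eq_mul]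
      ring
    rw [← hconst]
    exact integral_mono_on hσ14 _root_.intervalIntegrable_const
      (hseg σ (σ + 1/4) hσ0 hσ14 hσ1) hlow_pt
  have e3 : 0 ≤ ∫ τ in (0:ℝ)..σ, f τ :=
    intervalIntegral.integral_nonneg hσ0 (fun u _ => hf_nonneg u)
  have e4 : 0 ≤ ∫ τ in (σ + 1/4)..1, f τ :=
    intervalIntegral.integral_nonneg hσ1 (fun u _ => hf_nonneg u)
  linarith [e1, e2, e3, e4]
end

section
/- Let F : ℝⁿ → [0,∞) be C¹ with |z| g(|z|) ≤ F(z)/ν and F(z) ≤ L(|z| g(|z|) + 1), where g : [0,∞) → [1,∞) is non-decreasing, subadditive, and satisfies g(t) ≤ c₁ t for t ≥ 1. Suppose F is convex. Then there is a constant c depending only on L, ν, c₁ such that |∂F(z)| ≤ c g(|z|) for every z ∈ ℝⁿ. -/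
open Set

lemma convex_fderiv_le {E : Type*} [NormedAddCommGroup E] [NormedSpace ℝ E]
    {F : E → ℝ} (hc : ConvexOn ℝ Set.univ F) (hd : Differentiable ℝ F)
    (z h : E) : fderiv ℝ F z h ≤ F (z + h) - F z := by
  set φ : ℝ → ℝ := fun t => F (z + t • h) with hφ
  have hconv : ConvexOn ℝ Set.univ φ := by
    have := hc.comp_affineMap (AffineMap.lineMap z (z + h))
    convert this.subset (subset_preimage_univ) convex_univ using 1
    rotate_left 4
    ext t
    simp [φ, AffineMap.lineMap_apply, smul_sub]
    rw [add_comm]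
    all_goals rfl
  have hder : HasDerivAt φ (fderiv ℝ F z h) 0 := by
    have h1 : HasDerivAt (fun t : ℝ => z + t • h) h 0 := by
      simpa using ((hasDerivAt_id (0:ℝ)).smul_const h).const_add z
    have := ((hd (z + (0:ℝ) • h)).hasFDerivAt.comp_hasDerivAt 0 h1)
    simp only [zero_smul, add_zero] at this
    exact this
  have := hconv.le_slope_of_hasDerivAt (mem_univ 0) (mem_univ 1) one_pos hder
  simpa [slope_def_field, φ] using this

/-- Lemma 2.1 of the paper (Marcellini type gradient bound). -/
theorem gradient_bound_nearly_linear (ν L c₁ : ℝ) (hν : 0 < ν) (hL : 1 ≤ L)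
    (hc₁ : 0 < c₁) :
    ∃ c : ℝ, 0 < c ∧
      ∀ (n : ℕ) (g : ℝ → ℝ) (F : EuclideanSpace ℝ (Fin n) → ℝ),
        MonotoneOn g (Set.Ici 0) →
        (∀ t : ℝ, 0 ≤ t → 1 ≤ g t) →
        (∀ s t : ℝ, 0 ≤ s → 0 ≤ t → g (s + t) ≤ g s + g t) →
        (∀ t : ℝ, 1 ≤ t → g t ≤ c₁ * t) →
        ContDiff ℝ 1 F →
        ConvexOn ℝ Set.univ F →
        (∀ z, 0 ≤ F z) →
        (∀ z, ‖z‖ * g ‖z‖ ≤ F z / ν) →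
        (∀ z, F z ≤ L * (‖z‖ * g ‖z‖ + 1)) →
        ∀ z, ‖fderiv ℝ F z‖ ≤ c * g ‖z‖ := by
  refine ⟨L * (2 * c₁ + 5), by positivity, ?_⟩
  intro n g F hmono hg1 hsub hglin hF hconv hFpos _ hupper z
  have hd : Differentiable ℝ F := hF.differentiable one_ne_zero
  have hz0 : (0:ℝ) ≤ ‖z‖ := norm_nonneg z
  have hgz : 1 ≤ g ‖z‖ := hg1 _ hz0
  set gz := g ‖z‖
  set B := L * (2 * c₁ + 5) * gz * (1 + ‖z‖) with hB
  -- key estimate for vectors of norm 1 + ‖z‖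
  have key : ∀ h : EuclideanSpace ℝ (Fin n), ‖h‖ = 1 + ‖z‖ → fderiv ℝ F z h ≤ B := by
    intro h hh
    have h1 : fderiv ℝ F z h ≤ F (z + h) - F z := convex_fderiv_le hconv hd z h
    have h2 : F (z + h) ≤ L * (‖z + h‖ * g ‖z + h‖ + 1) := hupper _
    have hzh : ‖z + h‖ ≤ 2 * ‖z‖ + 1 := by
      calc ‖z + h‖ ≤ ‖z‖ + ‖h‖ := norm_add_le _ _
        _ = 2 * ‖z‖ + 1 := by rw [hh]; ring
    have hgzh : g ‖z + h‖ ≤ (2 + c₁) * gz := by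
      have m1 : g ‖z + h‖ ≤ g (2 * ‖z‖ + 1) :=
        hmono (mem_Ici.2 (norm_nonneg _)) (mem_Ici.2 (by linarith)) hzh
      have m2 : g (2 * ‖z‖ + 1) ≤ g ‖z‖ + g (‖z‖ + 1) := by
        have := hsub ‖z‖ (‖z‖ + 1) hz0 (by linarith)
        calc g (2 * ‖z‖ + 1) = g (‖z‖ + (‖z‖ + 1)) := by ring_nf
          _ ≤ g ‖z‖ + g (‖z‖ + 1) := this
      have m3 : g (‖z‖ + 1) ≤ g ‖z‖ + g 1 := hsub ‖z‖ 1 hz0 zero_le_one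
      have m4 : g 1 ≤ c₁ := by simpa using hglin 1 le_rfl
      nlinarith [hgz]
    have hmono' : ‖z + h‖ * g ‖z + h‖ ≤ (2 * ‖z‖ + 1) * ((2 + c₁) * gz) := by
      have hg0 : (0:ℝ) ≤ g ‖z + h‖ := le_trans zero_le_one (hg1 _ (norm_nonneg _))
      have : (0:ℝ) ≤ ‖z + h‖ := norm_nonneg _
      nlinarith [hgz, hc₁.le]
    have : F (z + h) ≤ L * ((2 * ‖z‖ + 1) * ((2 + c₁) * gz) + 1) := by nlinarith [hL]
    have hFz : 0 ≤ F z := hFpos z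
    have hfinal : L * ((2 * ‖z‖ + 1) * ((2 + c₁) * gz) + 1) ≤ B := by
      have hXY : (2 * ‖z‖ + 1) * ((2 + c₁) * gz) + 1 ≤ (2 * c₁ + 5) * gz * (1 + ‖z‖) := by
        nlinarith [mul_nonneg (sub_nonneg.2 hgz) hz0, hc₁.le, hgz, hz0]
      rw [hB, mul_assoc, mul_assoc]
      rw [mul_assoc] at hXY
      exact mul_le_mul_of_nonneg_left hXY (by linarith)
    linarith
  -- conclude via operator norm bound
  refine ContinuousLinearMap.opNorm_le_bound _ (by positivity) ?_
  intro x
  rcases eq_or_ne x 0 with rfl | hx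
  · simp
  · have hxn : (0:ℝ) < ‖x‖ := norm_pos_iff.2 hx
    set a : ℝ := (1 + ‖z‖) / ‖x‖ with ha
    have ha0 : 0 < a := by positivity
    have hnorm : ‖a • x‖ = 1 + ‖z‖ := by
      rw [norm_smul, Real.norm_eq_abs, abs_of_pos ha0, ha]
      field_simp
    have k1 : fderiv ℝ F z (a • x) ≤ B := key _ hnorm
    have k2 : fderiv ℝ F z (-(a • x)) ≤ B := key _ (by rw [norm_neg]; exact hnorm)
    have e1 : fderiv ℝ F z (a • x) = a * fderiv ℝ F z x := by
      rw [map_smul]; rfl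
    have e2 : fderiv ℝ F z (-(a • x)) = -(a * fderiv ℝ F z x) := by
      rw [map_neg, e1]
    have habs : |a * fderiv ℝ F z x| ≤ B := by
      rw [abs_le]; constructor <;> [linarith [e2 ▸ k2]; linarith [e1 ▸ k1]]
    have : |fderiv ℝ F z x| ≤ B / a := by
      rw [le_div_iff₀ ha0]
      calc |fderiv ℝ F z x| * a = |a * fderiv ℝ F z x| := by
            rw [abs_mul, abs_of_pos ha0]; ring
        _ ≤ B := habs
    have hBa : B / a = L * (2 * c₁ + 5) * gz * ‖x‖ := by
      rw [hB, ha]; field_simp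
    rw [Real.norm_eq_abs]
    calc |fderiv ℝ F z x| ≤ B / a := this
      _ = L * (2 * c₁ + 5) * gz * ‖x‖ := hBa
end

section
/- Let V_{ω,p}(z) := (|z|² + ω²)^{(p-2)/4} z for z ∈ ℝⁿ, p > 0, ω ∈ [0,1]. Then there exist constants 0 < c₁ ≤ c₂ depending only on n and p such that for all z₁, z₂ ∈ ℝⁿ (not both zero if ω = 0), c₁ (|z₁|² + |z₂|² + ω²)^{(p-2)/4} |z₁ - z₂| ≤ |V_{ω,p}(z₁) - V_{ω,p}(z₂)| ≤ c₂ (|z₁|² + |z₂|² + ω²)^{(p-2)/4} |z₁ - z₂|. -/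
set_option maxHeartbeats 1000000
open Real

-- key monotone fact: for 0 ≤ y ≤ x, 0 < x, 0 ≤ γ ≤ 1 : x^γ * y ≤ y^γ * x
lemma key1 {x y γ : ℝ} (hy : 0 ≤ y) (hyx : y ≤ x) (hx : 0 < x)
    (hγ0 : 0 ≤ γ) (hγ1 : γ ≤ 1) : x ^ γ * y ≤ y ^ γ * x := by
  rcases eq_or_lt_of_le hy with h0 | hy0
  · simp [← h0]
    positivity
  · have hθ : (0:ℝ) < y / x := by positivity
    have hθ1 : y / x ≤ 1 := by
      rw [div_le_one hx]; exact hyx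
    have h := Real.rpow_le_rpow_of_exponent_ge hθ hθ1 hγ1
    rw [Real.rpow_one, Real.div_rpow hy hx.le] at h
    have hP : (0:ℝ) < x ^ γ := Real.rpow_pos_of_pos hx γ
    rw [div_le_div_iff₀ hx (by positivity)] at h
    nlinarith [h]

-- (x^α - y^α) * x ≤ (1+α) * x^α * (x-y) for 0 ≤ y ≤ x, 0 < x, 0 ≤ α
lemma key_pos {x y α : ℝ} (hy : 0 ≤ y) (hyx : y ≤ x) (hx : 0 < x) (hα : 0 ≤ α) :
    (x ^ α - y ^ α) * x ≤ (1 + α) * x ^ α * (x - y) := by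
  have hP : (0:ℝ) < x ^ α := Real.rpow_pos_of_pos hx α
  have hQ : (0:ℝ) ≤ y ^ α := Real.rpow_nonneg hy α
  rcases le_or_gt α 1 with hα1 | hα1
  · -- x^α y ≤ y^α x gives (x^α - y^α) x ≤ x^α (x-y)
    have h := key1 hy hyx hx hα hα1
    nlinarith [h, mul_nonneg (mul_nonneg hα hP.le) (sub_nonneg.2 hyx)]
  · -- Bernoulli
    have hs : (-1:ℝ) ≤ y / x - 1 := by
      have : 0 ≤ y / x := by positivity
      linarith
    have h := one_add_mul_self_le_rpow_one_add hs hα1.le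
    rw [show (1 : ℝ) + (y / x - 1) = y / x by ring, Real.div_rpow hy hx.le] at h
    -- h : 1 + α * (y/x - 1) ≤ y^α / x^α
    rw [le_div_iff₀ hP] at h
    have h2 := mul_le_mul_of_nonneg_right h hx.le
    have h3 : (1 + α * (y / x - 1)) * x ^ α * x = x ^ α * x + α * (y - x) * x ^ α := by
      field_simp
    rw [h3] at h2
    nlinarith [h2, mul_nonneg hP.le (sub_nonneg.2 hyx)]

lemma L2pos {A B μ α : ℝ} (hB : 0 ≤ B) (hBA : B ≤ A) (hα : 0 ≤ α) (hx : 0 < A^2+μ^2) :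
    ((A^2+μ^2) ^ α - (B^2+μ^2) ^ α) * B ≤ 2*(1+α) * (A^2+μ^2) ^ α * (A-B) := by
  set x := A^2+μ^2 with hxdef
  set y := B^2+μ^2 with hydef
  have hy : 0 ≤ y := by positivity
  have hyx : y ≤ x := by rw [hxdef, hydef]; nlinarith
  have hxy : x - y = A^2 - B^2 := by rw [hxdef, hydef]; ring
  have kp := key_pos hy hyx hx hα
  have hP : (0:ℝ) < x ^ α := Real.rpow_pos_of_pos hx α
  have hA2 : A^2 ≤ x := by rw [hxdef]; nlinarith
  have h2 : (A+B)*B ≤ 2*x := by nlinarith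
  have hAB : (x - y)*B ≤ 2*x*(A-B) := by
    have := mul_le_mul_of_nonneg_left h2 (sub_nonneg.2 hBA)
    nlinarith [this]
  have hpos : (0:ℝ) ≤ (1+α)*x^α := by positivity
  have main : ((x ^ α - y ^ α) * B) * x ≤ (2*(1+α) * x ^ α * (A-B)) * x := by
    nlinarith [mul_le_mul_of_nonneg_right kp hB, mul_le_mul_of_nonneg_left hAB hpos]
  exact le_of_mul_le_mul_right main hx

lemma L2neg {A B μ β : ℝ} (hB : 0 ≤ B) (hBA : B ≤ A) (hβ0 : 0 < β) (hβ : β ≤ 1/2)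
    (hy : 0 < B^2+μ^2) (hyx : B^2+μ^2 ≤ A^2+μ^2) :
    ((B^2+μ^2) ^ (-β) - (A^2+μ^2) ^ (-β)) * B ≤ 2 * (A^2+μ^2) ^ (-β) * (A-B) := by
  set x := A^2+μ^2 with hxdef
  set y := B^2+μ^2 with hydef
  have hx : 0 < x := lt_of_lt_of_le hy hyx
  set P := x ^ β with hPdef
  set Q := y ^ β with hQdef
  have hP : 0 < P := Real.rpow_pos_of_pos hx β
  have hQ : 0 < Q := Real.rpow_pos_of_pos hy β
  set u := x ^ ((1:ℝ)/2) with hudef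
  set v := y ^ ((1:ℝ)/2) with hvdef
  have hu : 0 < u := Real.rpow_pos_of_pos hx _
  have hv : 0 < v := Real.rpow_pos_of_pos hy _
  have hu2 : u * u = x := by
    rw [hudef, ← Real.rpow_add hx]; norm_num
  have hPR : P * (x ^ ((1:ℝ)/2 - β)) = u := by
    rw [hPdef, hudef, ← Real.rpow_add hx]; norm_num
  have hQS : Q * (y ^ ((1:ℝ)/2 - β)) = v := by
    rw [hQdef, hvdef, ← Real.rpow_add hy]; norm_num
  have hSR : y ^ ((1:ℝ)/2 - β) ≤ x ^ ((1:ℝ)/2 - β) :=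
    Real.rpow_le_rpow hy.le hyx (by linarith)
  have hBv : B ≤ v := by
    have h1 : ((B^2 : ℝ)) ^ ((1:ℝ)/2) ≤ v := Real.rpow_le_rpow (by positivity)
      (by rw [hydef]; nlinarith) (by norm_num)
    calc B = ((B^2 : ℝ)) ^ ((1:ℝ)/2) := by
            rw [← Real.rpow_natCast B 2, ← Real.rpow_mul hB]; norm_num
      _ ≤ v := h1
  have hAu : A ≤ u := by
    have hA : 0 ≤ A := le_trans hB hBA
    have h1 : ((A^2 : ℝ)) ^ ((1:ℝ)/2) ≤ u := Real.rpow_le_rpow (by positivity)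
      (by rw [hxdef]; nlinarith) (by norm_num)
    calc A = ((A^2 : ℝ)) ^ ((1:ℝ)/2) := by
            rw [← Real.rpow_natCast A 2, ← Real.rpow_mul hA]; norm_num
      _ ≤ u := h1
  have hk := key1 hy.le hyx hx hβ0.le (by linarith)
  -- hk : x^β * y ≤ y^β * x, i.e. P*y ≤ Q*x
  have c1 : (P - Q)*B*x ≤ P*((x-y)*B) := by nlinarith [mul_le_mul_of_nonneg_right hk hB]
  have hABuv : A*B ≤ u*v := mul_le_mul hAu hBv hB hu.le
  have c2 : (x-y)*B ≤ 2*(u*v)*(A-B) := by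
    have hxy : x - y = A^2 - B^2 := by rw [hxdef, hydef]; ring
    rw [hxy]
    nlinarith [mul_le_mul_of_nonneg_right hABuv (sub_nonneg.2 hBA),
      mul_le_mul_of_nonneg_right (mul_le_mul_of_nonneg_right hBA hB) (sub_nonneg.2 hBA)]
  have c3 : P*(u*v) ≤ Q*x := by
    calc P*(u*v) = (Q*u)*(P * (y ^ ((1:ℝ)/2 - β))) := by rw [← hQS]; ring
      _ ≤ (Q*u)*(P * (x ^ ((1:ℝ)/2 - β))) := by
          apply mul_le_mul_of_nonneg_left _ (by positivity)
          exact mul_le_mul_of_nonneg_left hSR hP.le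
      _ = Q*(u*u) := by rw [hPR]; ring
      _ = Q*x := by rw [hu2]
  have goal' : (P - Q)*B ≤ 2*Q*(A-B) := by
    have hAB0 : (0:ℝ) ≤ 2*(A-B) := by linarith
    have m1 := mul_le_mul_of_nonneg_left c2 hP.le
    have m2 := mul_le_mul_of_nonneg_left c3 hAB0
    have main : ((P - Q)*B)*x ≤ (2*Q*(A-B))*x := by linarith [c1, m1, m2]
    exact le_of_mul_le_mul_right main hx
  rw [Real.rpow_neg hx.le, Real.rpow_neg hy.le, ← hPdef, ← hQdef]
  have key : 2*P⁻¹*(A-B) - (Q⁻¹-P⁻¹)*B = (2*Q*(A-B) - (P-Q)*B) * (P⁻¹ * Q⁻¹) := by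
    field_simp
  linarith [key, mul_nonneg (sub_nonneg.2 goal') (mul_pos (inv_pos.2 hP) (inv_pos.2 hQ)).le]

lemma Llow {A B μ β : ℝ} (hB : 0 ≤ B) (hBA : B ≤ A) (hβ0 : 0 < β) (hβ : β ≤ 1/2)
    (hy : 0 < B^2+μ^2) (hyx : B^2+μ^2 ≤ A^2+μ^2) :
    (1-2*β) * (A^2+μ^2) ^ (-β) * (A-B) ≤ (A^2+μ^2) ^ (-β) * A - (B^2+μ^2) ^ (-β) * B := by
  set x := A^2+μ^2 with hxdef
  set y := B^2+μ^2 with hydef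
  have hx : 0 < x := lt_of_lt_of_le hy hyx
  set P := x ^ β with hPdef
  set Q := y ^ β with hQdef
  have hP : 0 < P := Real.rpow_pos_of_pos hx β
  have hQ : 0 < Q := Real.rpow_pos_of_pos hy β
  have hA : 0 ≤ A := hB.trans hBA
  have goal' : P*B ≤ Q*(2*β*A + (1-2*β)*B) := by
    rcases eq_or_lt_of_le hB with hB0 | hB0
    · rw [← hB0]
      have h0 : (0:ℝ) ≤ 2*β*A := mul_nonneg (by linarith) hA
      nlinarith [mul_nonneg hQ.le h0]
    · have hBx : B^2*x ≤ A^2*y := by rw [hxdef, hydef]; nlinarith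
      have h1 : (B^2*x) ^ β ≤ (A^2*y) ^ β := Real.rpow_le_rpow (by positivity) hBx hβ0.le
      rw [Real.mul_rpow (by positivity) hx.le, Real.mul_rpow (by positivity) hy.le] at h1
      have hB2 : ((B^2:ℝ)) ^ β = B ^ (2*β) := by
        rw [← Real.rpow_natCast B 2, ← Real.rpow_mul hB]; norm_num
      have hA2 : ((A^2:ℝ)) ^ β = A ^ (2*β) := by
        rw [← Real.rpow_natCast A 2, ← Real.rpow_mul hA]; norm_num
      rw [hB2, hA2] at h1
      -- h1 : B^(2β) * P ≤ A^(2β) * Q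
      have hsplit : B = B ^ (2*β) * B ^ (1-2*β) := by
        rw [← Real.rpow_add hB0]; norm_num
      have hgm : A ^ (2*β) * B ^ (1-2*β) ≤ 2*β*A + (1-2*β)*B :=
        Real.geom_mean_le_arith_mean2_weighted (by linarith) (by linarith) hA hB (by ring)
      rw [← hPdef, ← hQdef] at h1
      have e : P * B = (B ^ (2*β) * P) * B ^ (1-2*β) := by
        nth_rewrite 1 [hsplit]; ring
      rw [e]
      calc (B ^ (2*β) * P) * B ^ (1-2*β) ≤ (A ^ (2*β) * Q) * B ^ (1-2*β) :=
            mul_le_mul_of_nonneg_right h1 (Real.rpow_nonneg hB _)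
        _ = Q * (A ^ (2*β) * B ^ (1-2*β)) := by ring
        _ ≤ Q * (2*β*A + (1-2*β)*B) := mul_le_mul_of_nonneg_left hgm hQ.le
  rw [Real.rpow_neg hx.le, Real.rpow_neg hy.le, ← hPdef, ← hQdef]
  have key : (P⁻¹*A - Q⁻¹*B) - (1-2*β)*P⁻¹*(A-B)
      = (Q*(2*β*A + (1-2*β)*B) - P*B) * (P⁻¹*Q⁻¹) := by
    field_simp; ring
  linarith [key, mul_nonneg (sub_nonneg.2 goal') (mul_pos (inv_pos.2 hP) (inv_pos.2 hQ)).le]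

section Vec
variable {F : Type*} [NormedAddCommGroup F] [InnerProductSpace ℝ F]

local notation "⟪" x ", " y "⟫" => @inner ℝ _ _ x y

lemma normV_sq (f₁ f₂ : ℝ) (z₁ z₂ : F) :
    ‖f₁ • z₁ - f₂ • z₂‖^2
      = f₁^2*‖z₁‖^2 - 2*(f₁*f₂)*⟪z₁, z₂⟫ + f₂^2*‖z₂‖^2 := by
  rw [@norm_sub_sq_real, norm_smul, norm_smul, real_inner_smul_left, real_inner_smul_right,
    Real.norm_eq_abs, Real.norm_eq_abs, mul_pow, mul_pow, sq_abs, sq_abs]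
  ring

lemma inner_V (f₁ f₂ : ℝ) (z₁ z₂ : F) :
    ⟪f₁ • z₁ - f₂ • z₂, z₁ - z₂⟫
      = f₁*‖z₁‖^2 - (f₁+f₂)*⟪z₁, z₂⟫ + f₂*‖z₂‖^2 := by
  rw [inner_sub_left, inner_sub_right, inner_sub_right, real_inner_smul_left,
    real_inner_smul_left, real_inner_smul_left, real_inner_smul_left,
    real_inner_self_eq_norm_sq, real_inner_self_eq_norm_sq, real_inner_comm z₂ z₁]
  ring

lemma normd_sq (z₁ z₂ : F) :
    ‖z₁ - z₂‖^2 = ‖z₁‖^2 - 2*⟪z₁, z₂⟫ + ‖z₂‖^2 := by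
  rw [@norm_sub_sq_real]


lemma keyPos {α : ℝ} (hα : 0 ≤ α) (ω : ℝ) (z₁ z₂ : F)
    (hBA : ‖z₂‖ ≤ ‖z₁‖) (hx : 0 < ‖z₁‖^2 + ω^2) :
    (2:ℝ)^(-α)/2 * (‖z₁‖^2+‖z₂‖^2+ω^2) ^ α * ‖z₁ - z₂‖ ≤
      ‖((‖z₁‖^2+ω^2) ^ α) • z₁ - ((‖z₂‖^2+ω^2) ^ α) • z₂‖ ∧
    ‖((‖z₁‖^2+ω^2) ^ α) • z₁ - ((‖z₂‖^2+ω^2) ^ α) • z₂‖ ≤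
      (3+2*α) * (‖z₁‖^2+‖z₂‖^2+ω^2) ^ α * ‖z₁ - z₂‖ := by
  have hA : (0:ℝ) ≤ ‖z₁‖ := norm_nonneg _
  have hB : (0:ℝ) ≤ ‖z₂‖ := norm_nonneg _
  have hd : (0:ℝ) ≤ ‖z₁ - z₂‖ := norm_nonneg _
  set A := ‖z₁‖
  set B := ‖z₂‖
  set d := ‖z₁ - z₂‖ with hddef
  set x := A^2+ω^2 with hxdef
  set y := B^2+ω^2 with hydef
  set S := A^2+B^2+ω^2 with hSdef
  have hy : (0:ℝ) ≤ y := by positivity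
  have hyx : y ≤ x := by rw [hxdef, hydef]; nlinarith
  have hxS : x ≤ S := by rw [hxdef, hSdef]; nlinarith
  have hS2 : S ≤ 2*x := by rw [hxdef, hSdef]; nlinarith
  have hS : (0:ℝ) < S := lt_of_lt_of_le hx hxS
  set f₁ := x ^ α with hf₁def
  set f₂ := y ^ α with hf₂def
  have hf₁ : 0 < f₁ := Real.rpow_pos_of_pos hx α
  have hf₂ : 0 ≤ f₂ := Real.rpow_nonneg hy α
  have hf21 : f₂ ≤ f₁ := Real.rpow_le_rpow hy hyx hα
  have hdel : A - B ≤ d := by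
    rw [hddef]; exact norm_sub_norm_le z₁ z₂
  have hfS : f₁ ≤ S ^ α := Real.rpow_le_rpow (le_of_lt hx) hxS hα
  have hSf : (2:ℝ)^(-α) * S ^ α ≤ f₁ := by
    have h1 : S ^ α ≤ (2*x) ^ α := Real.rpow_le_rpow hS.le hS2 hα
    rw [Real.mul_rpow (by norm_num) hx.le] at h1
    have h2 : (0:ℝ) < (2:ℝ)^(-α) := Real.rpow_pos_of_pos (by norm_num) _
    have h3 : (2:ℝ)^(-α) * (2:ℝ)^α = 1 := by
      rw [← Real.rpow_add (by norm_num)]; norm_num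
    nlinarith [mul_le_mul_of_nonneg_left h1 h2.le]
  have hub : ‖f₁ • z₁ - f₂ • z₂‖ ≤ f₁*d + (f₁-f₂)*B := by
    have decomp : f₁ • z₁ - f₂ • z₂ = f₁ • (z₁ - z₂) + (f₁-f₂) • z₂ := by
      rw [smul_sub, sub_smul]; abel
    calc ‖f₁ • z₁ - f₂ • z₂‖ ≤ ‖f₁ • (z₁ - z₂)‖ + ‖(f₁-f₂) • z₂‖ := by
          rw [decomp]; exact norm_add_le _ _
      _ = f₁*d + (f₁-f₂)*B := by
          rw [norm_smul, norm_smul, Real.norm_eq_abs, Real.norm_eq_abs,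
            abs_of_nonneg hf₁.le, abs_of_nonneg (sub_nonneg.2 hf21)]
  have hL2 : (f₁-f₂)*B ≤ 2*(1+α)*f₁*(A-B) := L2pos hB hBA hα hx
  constructor
  · -- lower bound
    rcases eq_or_lt_of_le hd with hd0 | hd0
    · rw [← hd0]; simpa using norm_nonneg _
    · have hip : f₁/2 * d^2 ≤ ⟪f₁ • z₁ - f₂ • z₂, z₁ - z₂⟫ := by
        rw [inner_V]
        have hd2 : d^2 = A^2 - 2*⟪z₁, z₂⟫ + B^2 := normd_sq z₁ z₂
        have h1 : (0:ℝ) ≤ f₂*(A^2 - 2*⟪z₁, z₂⟫ + B^2) := by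
          rw [← hd2]; positivity
        have h2 : (0:ℝ) ≤ (f₁-f₂)*(A^2-B^2) := by
          apply mul_nonneg (sub_nonneg.2 hf21)
          nlinarith
        rw [hd2]
        linarith
      have hcs : ⟪f₁ • z₁ - f₂ • z₂, z₁ - z₂⟫ ≤ ‖f₁ • z₁ - f₂ • z₂‖ * d :=
        real_inner_le_norm _ _
      have hmain : (f₁/2 * d) * d ≤ ‖f₁ • z₁ - f₂ • z₂‖ * d := by
        nlinarith [hip, hcs]
      have h4 : f₁/2 * d ≤ ‖f₁ • z₁ - f₂ • z₂‖ := le_of_mul_le_mul_right hmain hd0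
      have h5 : (2:ℝ)^(-α)/2 * S ^ α * d ≤ f₁/2*d := by
        nlinarith [hSf, hd0.le]
      linarith
  · -- upper bound
    have h6 : (f₁-f₂)*B ≤ 2*(1+α)*f₁*d := by
      have : 2*(1+α)*f₁*(A-B) ≤ 2*(1+α)*f₁*d :=
        mul_le_mul_of_nonneg_left hdel (by positivity)
      linarith
    have h7 : ‖f₁ • z₁ - f₂ • z₂‖ ≤ (3+2*α)*f₁*d := by nlinarith [hub, h6, hf₁, hd]
    have h8 : (3+2*α)*f₁*d ≤ (3+2*α) * S ^ α * d := by
      have := mul_le_mul_of_nonneg_right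
        (mul_le_mul_of_nonneg_left hfS (by linarith : (0:ℝ) ≤ 3+2*α)) hd
      linarith [this]
    linarith

lemma keyNeg {β : ℝ} (hβ0 : 0 < β) (hβ : β ≤ 1/2) (ω : ℝ) (z₁ z₂ : F)
    (hBA : ‖z₂‖ ≤ ‖z₁‖) (hx : 0 < ‖z₁‖^2 + ω^2) :
    (1-2*β) * (‖z₁‖^2+‖z₂‖^2+ω^2) ^ (-β) * ‖z₁ - z₂‖ ≤
      ‖((‖z₁‖^2+ω^2) ^ (-β)) • z₁ - ((‖z₂‖^2+ω^2) ^ (-β)) • z₂‖ ∧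
    ‖((‖z₁‖^2+ω^2) ^ (-β)) • z₁ - ((‖z₂‖^2+ω^2) ^ (-β)) • z₂‖ ≤
      6 * (‖z₁‖^2+‖z₂‖^2+ω^2) ^ (-β) * ‖z₁ - z₂‖ := by
  rcases eq_or_lt_of_le (show (0:ℝ) ≤ ‖z₂‖^2+ω^2 by positivity) with h0 | hy
  · -- degenerate case : z₂ = 0 and ω = 0
    have hB2 : ‖z₂‖^2 = 0 := by nlinarith [sq_nonneg ‖z₂‖, sq_nonneg ω]
    have hω2 : ω^2 = 0 := by nlinarith [sq_nonneg ‖z₂‖, sq_nonneg ω]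
    have hz₂ : z₂ = (0:F) := norm_eq_zero.mp (pow_eq_zero_iff (two_ne_zero).symm.symm |>.mp hB2)
    have hω0 : ω = 0 := pow_eq_zero_iff (two_ne_zero).symm.symm |>.mp hω2
    subst hz₂; subst hω0
    simp only [norm_zero, smul_zero, sub_zero]
    have hA : (0:ℝ) ≤ ‖z₁‖ := norm_nonneg _
    have e0 : ((0:ℝ)^2 : ℝ) = 0 := by norm_num
    rw [norm_smul, Real.norm_eq_abs,
      abs_of_nonneg (Real.rpow_nonneg (by positivity) _)]
    have ebase : ‖z₁‖^2+0^2+(0:ℝ)^2 = ‖z₁‖^2+(0:ℝ)^2 := by norm_num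
    rw [ebase]
    have hc : (0:ℝ) ≤ (‖z₁‖^2+(0:ℝ)^2) ^ (-β) := Real.rpow_nonneg (by positivity) _
    constructor
    · nlinarith [mul_nonneg hc hA, mul_nonneg (mul_nonneg (by linarith : (0:ℝ) ≤ 2*β) hc) hA]
    · nlinarith [mul_nonneg hc hA]
  · -- main case : ‖z₂‖^2 + ω^2 > 0
    have hA : (0:ℝ) ≤ ‖z₁‖ := norm_nonneg _
    have hB : (0:ℝ) ≤ ‖z₂‖ := norm_nonneg _
    have hd : (0:ℝ) ≤ ‖z₁ - z₂‖ := norm_nonneg _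
    set A := ‖z₁‖
    set B := ‖z₂‖
    set d := ‖z₁ - z₂‖ with hddef
    set x := A^2+ω^2 with hxdef
    set y := B^2+ω^2 with hydef
    set S := A^2+B^2+ω^2 with hSdef
    have hyx : y ≤ x := by rw [hxdef, hydef]; nlinarith
    have hxS : x ≤ S := by rw [hxdef, hSdef]; nlinarith
    have hS2 : S ≤ 2*x := by rw [hxdef, hSdef]; nlinarith
    have hS : (0:ℝ) < S := lt_of_lt_of_le hx hxS
    set f₁ := x ^ (-β) with hf₁def
    set f₂ := y ^ (-β) with hf₂def
    have hf₁ : 0 < f₁ := Real.rpow_pos_of_pos hx _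
    have hf₂ : 0 < f₂ := Real.rpow_pos_of_pos hy _
    have hf12 : f₁ ≤ f₂ := Real.rpow_le_rpow_of_nonpos hy hyx (by linarith)
    have hdel : A - B ≤ d := by rw [hddef]; exact norm_sub_norm_le z₁ z₂
    have hAB0 : (0:ℝ) ≤ A - B := sub_nonneg.2 hBA
    -- comparisons of f₁ with S^(-β)
    have hfS : S ^ (-β) ≤ f₁ := Real.rpow_le_rpow_of_nonpos hx hxS (by linarith)
    have hSf : f₁ ≤ 2 * S ^ (-β) := by
      have hhalf : S/2 ≤ x := by linarith
      have h1 : f₁ ≤ (S/2) ^ (-β) :=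
        Real.rpow_le_rpow_of_nonpos (by linarith) hhalf (by linarith)
      have h2 : ((S/2 : ℝ)) ^ (-β) = S ^ (-β) * (2:ℝ)^β := by
        rw [Real.div_rpow hS.le (by norm_num), Real.rpow_neg (by norm_num : (0:ℝ) ≤ 2),
          div_eq_mul_inv, inv_inv]
      have h3 : (2:ℝ)^β ≤ 2 := by
        calc (2:ℝ)^β ≤ (2:ℝ)^(1:ℝ) :=
              Real.rpow_le_rpow_of_exponent_le (by norm_num) (by linarith)
          _ = 2 := Real.rpow_one 2
      have h4 : (0:ℝ) ≤ S ^ (-β) := Real.rpow_nonneg hS.le _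
      calc f₁ ≤ S ^ (-β) * (2:ℝ)^β := by rw [← h2]; exact h1
        _ ≤ S ^ (-β) * 2 := mul_le_mul_of_nonneg_left h3 h4
        _ = 2 * S ^ (-β) := by ring
    have hlow : (1-2*β)*f₁*(A-B) ≤ f₁*A - f₂*B := Llow hB hBA hβ0 hβ hy hyx
    have hL2 : (f₂-f₁)*B ≤ 2*f₁*(A-B) := L2neg hB hBA hβ0 hβ hy hyx
    have h1 : ‖f₁ • z₁ - f₂ • z₂‖^2 = f₁^2*A^2 - 2*(f₁*f₂)*⟪z₁, z₂⟫ + f₂^2*B^2 :=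
      normV_sq f₁ f₂ z₁ z₂
    have h2 : d^2 = A^2 - 2*⟪z₁, z₂⟫ + B^2 := normd_sq z₁ z₂
    constructor
    · -- lower bound
      have h5 : (A-B)^2 ≤ d^2 := sq_le_sq' (by linarith) hdel
      have hlow0 : (0:ℝ) ≤ (1-2*β)*f₁*(A-B) := by
        apply mul_nonneg (mul_nonneg (by linarith) hf₁.le) hAB0
      have hsq : ((1-2*β)*f₁*(A-B))^2 ≤ (f₁*A - f₂*B)^2 := pow_le_pow_left₀ hlow0 hlow 2
      have hprod1 : f₁*f₁*(d^2-(A-B)^2) ≤ f₁*f₂*(d^2-(A-B)^2) :=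
        mul_le_mul_of_nonneg_right (mul_le_mul_of_nonneg_left hf12 hf₁.le) (sub_nonneg.2 h5)
      have hprod2 : (1-2*β)^2*(f₁*f₁*(d^2-(A-B)^2)) ≤ f₁*f₁*(d^2-(A-B)^2) := by
        have hcc : (1-2*β)^2 ≤ 1 := by nlinarith
        nlinarith [mul_nonneg (mul_nonneg hf₁.le hf₁.le) (sub_nonneg.2 h5)]
      have e1 : ‖f₁ • z₁ - f₂ • z₂‖^2 = f₁*f₂*(d^2 - (A-B)^2) + (f₁*A - f₂*B)^2 := by
        have e2 : f₁*f₂*(d^2 - (A-B)^2) + (f₁*A - f₂*B)^2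
            = f₁^2*A^2 - 2*(f₁*f₂)*⟪z₁, z₂⟫ + f₂^2*B^2 := by
          rw [h2]; ring
        rw [h1, ← e2]
      have hsqfin : ((1-2*β)*f₁*d)^2 ≤ ‖f₁ • z₁ - f₂ • z₂‖^2 := by
        rw [e1]
        have expand : ((1-2*β)*f₁*d)^2
            = (1-2*β)^2*(f₁*f₁*(d^2-(A-B)^2)) + ((1-2*β)*f₁*(A-B))^2 := by ring
        rw [expand]
        have hsq2 : ((1-2*β)*f₁*(A-B))^2 ≤ (f₁*A - f₂*B)^2 := hsq
        linarith [hprod1, hprod2, hsq2]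
      have hfin : (1-2*β)*f₁*d ≤ ‖f₁ • z₁ - f₂ • z₂‖ := by
        have hln : (0:ℝ) ≤ (1-2*β)*f₁*d := by
          apply mul_nonneg (mul_nonneg (by linarith) hf₁.le) hd
        exact (pow_le_pow_iff_left₀ hln (norm_nonneg _) (two_ne_zero)).mp hsqfin
      have hstep : (1-2*β) * S ^ (-β) * d ≤ (1-2*β)*f₁*d := by
        have := mul_le_mul_of_nonneg_right
          (mul_le_mul_of_nonneg_left hfS (by linarith : (0:ℝ) ≤ 1-2*β)) hd
        linarith [this]
      linarith
    · -- upper bound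
      have hub : ‖f₁ • z₁ - f₂ • z₂‖ ≤ f₁*d + (f₂-f₁)*B := by
        have decomp : f₁ • z₁ - f₂ • z₂ = f₁ • (z₁ - z₂) + (f₁-f₂) • z₂ := by
          rw [smul_sub, sub_smul]; abel
        calc ‖f₁ • z₁ - f₂ • z₂‖ ≤ ‖f₁ • (z₁ - z₂)‖ + ‖(f₁-f₂) • z₂‖ := by
              rw [decomp]; exact norm_add_le _ _
          _ = f₁*d + (f₂-f₁)*B := by
              rw [norm_smul, norm_smul, Real.norm_eq_abs, Real.norm_eq_abs,
                abs_of_nonneg hf₁.le, abs_of_nonpos (sub_nonpos.2 hf12)]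
              ring
      have h6 : (f₂-f₁)*B ≤ 2*f₁*d := by
        have := mul_le_mul_of_nonneg_left hdel (by positivity : (0:ℝ) ≤ 2*f₁)
        linarith
      have h7 : ‖f₁ • z₁ - f₂ • z₂‖ ≤ 3*f₁*d := by linarith
      have h8 : 3*f₁*d ≤ 6 * S ^ (-β) * d := by
        have := mul_le_mul_of_nonneg_right
          (mul_le_mul_of_nonneg_left hSf (by norm_num : (0:ℝ) ≤ 3)) hd
        linarith [this]
      linarith


end Vec

/-- the basic estimate (Vm) for the vector field `V_{ω,p}`. -/
theorem V_field_estimate (n : ℕ) (p : ℝ) (hp : 0 < p) :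
    ∃ c₁ c₂ : ℝ, 0 < c₁ ∧ c₁ ≤ c₂ ∧
      ∀ (ω : ℝ), ω ∈ Set.Icc (0:ℝ) 1 →
      ∀ z₁ z₂ : EuclideanSpace ℝ (Fin n), 0 < ‖z₁‖ + ‖z₂‖ + ω →
        c₁ * (‖z₁‖^2 + ‖z₂‖^2 + ω^2) ^ ((p-2)/4) * ‖z₁ - z₂‖ ≤
            ‖((‖z₁‖^2 + ω^2) ^ ((p-2)/4)) • z₁ - ((‖z₂‖^2 + ω^2) ^ ((p-2)/4)) • z₂‖ ∧
          ‖((‖z₁‖^2 + ω^2) ^ ((p-2)/4)) • z₁ - ((‖z₂‖^2 + ω^2) ^ ((p-2)/4)) • z₂‖ ≤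
            c₂ * (‖z₁‖^2 + ‖z₂‖^2 + ω^2) ^ ((p-2)/4) * ‖z₁ - z₂‖ := by
  have norm_pos_aux : ∀ (ω : ℝ), 0 ≤ ω → ∀ z₁ z₂ : EuclideanSpace ℝ (Fin n),
      ‖z₂‖ ≤ ‖z₁‖ → 0 < ‖z₁‖ + ‖z₂‖ + ω → 0 < ‖z₁‖^2 + ω^2 := by
    intro ω hω0 z₁ z₂ hBA hpos
    by_cases hA0 : ‖z₁‖ = 0
    · have hB0 : ‖z₂‖ = 0 := le_antisymm (hA0 ▸ hBA) (norm_nonneg _)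
      have hωpos : 0 < ω := by rw [hA0, hB0] at hpos; linarith
      rw [hA0]
      nlinarith [sq_nonneg ω]
    · have hApos : 0 < ‖z₁‖ := lt_of_le_of_ne (norm_nonneg _) (Ne.symm hA0)
      nlinarith [sq_nonneg ω]
  rcases le_or_gt 2 p with hp2 | hp2
  · -- the case p ≥ 2
    set α := (p-2)/4 with hαdef
    have hα : 0 ≤ α := by rw [hαdef]; linarith
    refine ⟨(2:ℝ)^(-α)/2, 3+2*α, by positivity, ?_, ?_⟩
    · have h1 : (2:ℝ)^(-α) ≤ 1 :=
        Real.rpow_le_one_of_one_le_of_nonpos (by norm_num) (by linarith)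
      linarith
    · intro ω hω z₁ z₂ hpos
      obtain ⟨hω0, _⟩ := hω
      rcases le_total ‖z₂‖ ‖z₁‖ with hBA | hBA
      · exact keyPos hα ω z₁ z₂ hBA (norm_pos_aux ω hω0 z₁ z₂ hBA hpos)
      · have hx : 0 < ‖z₂‖^2 + ω^2 :=
          norm_pos_aux ω hω0 z₂ z₁ hBA (by linarith)
        obtain ⟨k1, k2⟩ := keyPos hα ω z₂ z₁ hBA hx
        rw [show ‖z₂‖^2+‖z₁‖^2+ω^2 = ‖z₁‖^2+‖z₂‖^2+ω^2 from by ring,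
          norm_sub_rev z₂ z₁,
          show ‖((‖z₂‖^2+ω^2) ^ α) • z₂ - ((‖z₁‖^2+ω^2) ^ α) • z₁‖
            = ‖((‖z₁‖^2+ω^2) ^ α) • z₁ - ((‖z₂‖^2+ω^2) ^ α) • z₂‖ from norm_sub_rev _ _]
          at k1 k2
        exact ⟨k1, k2⟩
  · -- the case 0 < p < 2
    have hexp : (p-2)/4 = -((2-p)/4) := by ring
    rw [hexp]
    set β := (2-p)/4 with hβdef
    have hβ0 : 0 < β := by rw [hβdef]; linarith
    have hβ : β ≤ 1/2 := by rw [hβdef]; linarith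
    refine ⟨1-2*β, 6, by rw [hβdef]; linarith, by rw [hβdef]; linarith, ?_⟩
    intro ω hω z₁ z₂ hpos
    obtain ⟨hω0, _⟩ := hω
    rcases le_total ‖z₂‖ ‖z₁‖ with hBA | hBA
    · exact keyNeg hβ0 hβ ω z₁ z₂ hBA (norm_pos_aux ω hω0 z₁ z₂ hBA hpos)
    · have hx : 0 < ‖z₂‖^2 + ω^2 :=
        norm_pos_aux ω hω0 z₂ z₁ hBA (by linarith)
      obtain ⟨k1, k2⟩ := keyNeg hβ0 hβ ω z₂ z₁ hBA hx
      rw [show ‖z₂‖^2+‖z₁‖^2+ω^2 = ‖z₁‖^2+‖z₂‖^2+ω^2 from by ring,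
        norm_sub_rev z₂ z₁,
        show ‖((‖z₂‖^2+ω^2) ^ (-β)) • z₂ - ((‖z₁‖^2+ω^2) ^ (-β)) • z₁‖
          = ‖((‖z₁‖^2+ω^2) ^ (-β)) • z₁ - ((‖z₂‖^2+ω^2) ^ (-β)) • z₂‖ from norm_sub_rev _ _]
        at k1 k2
      exact ⟨k1, k2⟩
end
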